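/- Let p > 3 be a prime and let k ∈ ℤ/pℤ with k ≠ 0 and k ≠ -1. If k² + k + 1 ≠ 0 in ℤ/pℤ and Ω_k^p ≠ Ω_1^p, then the set Ω_k^p has cardinality exactly 6. -/

import Mathlib

/-- `Ω_k^p := {k, -1-k, k⁻¹, -1-k⁻¹, -(k+1)⁻¹, (k+1)⁻¹ - 1} ⊆ ℤ/pℤ`. -/
def Omega (p : ℕ) (k : ZMod p) : Finset (ZMod p) :=
  {k, -1 - k, k⁻¹, -1 - k⁻¹, -(k + 1)⁻¹, (k + 1)⁻¹ - 1}

lemma two_ne (p : ℕ) [Fact p.Prime] (hp3 : 3 < p) : (2 : ZMod p) ≠ 0 := by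
  have : ((2:ℕ) : ZMod p) ≠ 0 := by
    rw [Ne, ZMod.natCast_eq_zero_iff]
    intro h
    have := Nat.le_of_dvd (by norm_num) h
    omega
  simpa using this

lemma omega_one (p : ℕ) [Fact p.Prime] (hp3 : 3 < p) :
    Omega p 1 = {1, -2, -(2:ZMod p)⁻¹} := by
  have h2 : (2:ZMod p) ≠ 0 := two_ne p hp3
  simp only [Omega]
  rw [inv_one, show ((-1:ZMod p) - 1) = -2 by ring,
      show ((1:ZMod p)+1) = 2 by ring,
      show ((2:ZMod p)⁻¹ - 1) = -2⁻¹ by field_simp; ring]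
  ext x; simp only [Finset.mem_insert, Finset.mem_singleton]; tauto

lemma omega_neg_two (p : ℕ) [Fact p.Prime] (hp3 : 3 < p) :
    Omega p (-2) = Omega p 1 := by
  have h2 : (2:ZMod p) ≠ 0 := two_ne p hp3
  rw [omega_one p hp3]
  simp only [Omega]
  rw [show ((-1:ZMod p) - -2) = 1 by ring,
      show ((-2:ZMod p))⁻¹ = -2⁻¹ by rw [inv_neg],
      show ((-1:ZMod p) - -2⁻¹) = -2⁻¹ by field_simp; ring,
      show ((-2:ZMod p)+1) = -1 by ring,
      show ((-1:ZMod p))⁻¹ = -1 by rw [inv_neg, inv_one],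
      show (-(-1:ZMod p)) = 1 by ring,
      show ((-1:ZMod p) - 1) = -2 by ring]
  ext x; simp only [Finset.mem_insert, Finset.mem_singleton]; tauto

lemma omega_half (p : ℕ) [Fact p.Prime] (hp3 : 3 < p) (k : ZMod p)
    (hk : 2*k + 1 = 0) : Omega p k = Omega p 1 := by
  have h2 : (2:ZMod p) ≠ 0 := two_ne p hp3
  have hkinv : k⁻¹ = -2 := inv_eq_of_mul_eq_one_right (by linear_combination -hk)
  have hk1 : (k+1)⁻¹ = 2 := inv_eq_of_mul_eq_one_right (by linear_combination hk)
  have hkval : k = -(2:ZMod p)⁻¹ := by field_simp; linear_combination hk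
  rw [omega_one p hp3]
  simp only [Omega]
  rw [hkinv, hk1,
      show ((-1:ZMod p) - k) = k by linear_combination -hk,
      show ((-1:ZMod p) - -2) = 1 by ring,
      show ((2:ZMod p) - 1) = 1 by ring, hkval]
  ext x; simp only [Finset.mem_insert, Finset.mem_singleton]; tauto

theorem stmt_4 (p : ℕ) [Fact p.Prime] (hp3 : 3 < p) (k : ZMod p)
    (hk0 : k ≠ 0) (hk1 : k ≠ -1)
    (h1 : k ^ 2 + k + 1 ≠ 0) (h2 : Omega p k ≠ Omega p 1) :
    (Omega p k).card = 6 := by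
  have hk1' : k + 1 ≠ 0 := fun h => hk1 (by linear_combination h)
  have hne1 : k ≠ 1 := fun h => h2 (by rw [h])
  have hne2 : k + 2 ≠ 0 := fun h => by
    apply h2
    rw [show k = -2 by linear_combination h]
    exact omega_neg_two p hp3
  have hneh : 2*k + 1 ≠ 0 := fun h => h2 (omega_half p hp3 k h)
  -- the six elements
  -- pairwise disequalities
  have nab : k ≠ -1 - k := by
    intro h; exact hneh (by linear_combination h)
  have nac : k ≠ k⁻¹ := by
    intro h; field_simp at h
    rcases mul_eq_zero.mp (show (k-1)*(k+1) = 0 by linear_combination h) with h'|h'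
    · exact hne1 (by linear_combination h')
    · exact hk1' h'
  have nad : k ≠ -1 - k⁻¹ := by
    intro h; field_simp at h
    exact h1 (by linear_combination h)
  have nae : k ≠ -(k+1)⁻¹ := by
    intro h; field_simp at h
    exact h1 (by linear_combination h)
  have naf : k ≠ (k+1)⁻¹ - 1 := by
    intro h; field_simp at h
    rcases mul_eq_zero.mp (show k*(k+2) = 0 by linear_combination h) with h'|h'
    · exact hk0 h'
    · exact hne2 h'
  have nbc : -1 - k ≠ k⁻¹ := by
    intro h; field_simp at h
    exact h1 (by linear_combination -h)
  have nbd : -1 - k ≠ -1 - k⁻¹ := by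
    intro h; field_simp at h
    rcases mul_eq_zero.mp (show (k-1)*(k+1) = 0 by linear_combination -h) with h'|h'
    · exact hne1 (by linear_combination h')
    · exact hk1' h'
  have nbe : -1 - k ≠ -(k+1)⁻¹ := by
    intro h; field_simp at h
    rcases mul_eq_zero.mp (show k*(k+2) = 0 by linear_combination -h) with h'|h'
    · exact hk0 h'
    · exact hne2 h'
  have nbf : -1 - k ≠ (k+1)⁻¹ - 1 := by
    intro h; field_simp at h
    exact h1 (by linear_combination -h)
  have ncd : k⁻¹ ≠ -1 - k⁻¹ := by
    intro h; field_simp at h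
    exact hne2 (by linear_combination h)
  have nce : k⁻¹ ≠ -(k+1)⁻¹ := by
    intro h; field_simp at h
    exact hneh (by linear_combination h)
  have ncf : k⁻¹ ≠ (k+1)⁻¹ - 1 := by
    intro h; field_simp at h
    exact h1 (by linear_combination h)
  have nde : -1 - k⁻¹ ≠ -(k+1)⁻¹ := by
    intro h; field_simp at h
    exact h1 (by linear_combination -h)
  have ndf : -1 - k⁻¹ ≠ (k+1)⁻¹ - 1 := by
    intro h; field_simp at h
    exact hneh (by linear_combination -h)
  have nef : -(k+1)⁻¹ ≠ (k+1)⁻¹ - 1 := by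
    intro h; field_simp at h
    rcases mul_eq_zero.mp (show (k-1)*(k+1) = 0 by linear_combination (k+1)*h) with h'|h'
    · exact hne1 (by linear_combination h')
    · exact hk1' h'
  -- compute cardinality
  have hA : k ∉ ({-1 - k, k⁻¹, -1 - k⁻¹, -(k + 1)⁻¹, (k + 1)⁻¹ - 1} : Finset (ZMod p)) := by
    simp only [Finset.mem_insert, Finset.mem_singleton]; push_neg
    exact ⟨nab, nac, nad, nae, naf⟩
  have hB : -1 - k ∉ ({k⁻¹, -1 - k⁻¹, -(k + 1)⁻¹, (k + 1)⁻¹ - 1} : Finset (ZMod p)) := by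
    simp only [Finset.mem_insert, Finset.mem_singleton]; push_neg
    exact ⟨nbc, nbd, nbe, nbf⟩
  have hC : k⁻¹ ∉ ({-1 - k⁻¹, -(k + 1)⁻¹, (k + 1)⁻¹ - 1} : Finset (ZMod p)) := by
    simp only [Finset.mem_insert, Finset.mem_singleton]; push_neg
    exact ⟨ncd, nce, ncf⟩
  have hD : -1 - k⁻¹ ∉ ({-(k + 1)⁻¹, (k + 1)⁻¹ - 1} : Finset (ZMod p)) := by
    simp only [Finset.mem_insert, Finset.mem_singleton]; push_neg
    exact ⟨nde, ndf⟩
  have hE : -(k + 1)⁻¹ ∉ ({(k + 1)⁻¹ - 1} : Finset (ZMod p)) := by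
    simp only [Finset.mem_singleton]
    exact nef
  simp only [Omega]
  rw [Finset.card_insert_of_notMem hA, Finset.card_insert_of_notMem hB,
      Finset.card_insert_of_notMem hC, Finset.card_insert_of_notMem hD,
      Finset.card_insert_of_notMem hE, Finset.card_singleton]
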